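/- For every real ℓ > 0 there exists a set P of primes such that ∑_{p∈P} 1/p = ℓ and ∑_{p∈P} 1/√p < ∞. -/
import Mathlib


open Filter Topology

namespace Stmt1Greedy

/-- the `t`-th prime -/
noncomputable def q (t : ℕ) : ℕ := Nat.nth Nat.Prime t

lemma q_prime (t : ℕ) : (q t).Prime := Nat.prime_nth_prime t

lemma q_cast_pos (t : ℕ) : (0 : ℝ) < (q t : ℝ) := by
  exact_mod_cast (q_prime t).pos

lemma q_inv_pos (t : ℕ) : (0 : ℝ) < 1 / (q t : ℝ) := div_pos one_pos (q_cast_pos t)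

lemma q_strictMono : StrictMono q := fun _ _ h =>
  (Nat.nth_lt_nth Nat.infinite_setOf_prime).2 h

/-- Bertrand: the next prime is at most twice the current one. -/
lemma q_succ_le (t : ℕ) : q (t + 1) ≤ 2 * q t := by
  obtain ⟨p, hp, h1, h2⟩ := Nat.exists_prime_lt_and_le_two_mul (q t) (q_prime t).pos.ne'
  by_contra h
  push_neg at h
  have hc : Nat.nth Nat.Prime (Nat.count Nat.Prime p) = p := Nat.nth_count hp
  have h3 : q t < Nat.nth Nat.Prime (Nat.count Nat.Prime p) := by rw [hc]; exact h1
  have h4 : Nat.nth Nat.Prime (Nat.count Nat.Prime p) < q (t + 1) := by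
    rw [hc]; exact lt_of_le_of_lt h2 h
  have h5 := (Nat.nth_lt_nth Nat.infinite_setOf_prime).1 h3
  have h6 := (Nat.nth_lt_nth Nat.infinite_setOf_prime).1 h4
  omega

/-- key cross bound: `1/q t ≤ 2/q (t+1)`. -/
lemma cross (t : ℕ) : (1 : ℝ) / (q t : ℝ) ≤ 2 / (q (t + 1) : ℝ) := by
  rw [div_le_div_iff₀ (q_cast_pos t) (q_cast_pos (t + 1))]
  have : ((q (t + 1) : ℝ)) ≤ 2 * (q t : ℝ) := by exact_mod_cast q_succ_le t
  linarith

open scoped Classical in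
/-- greedy partial sums -/
noncomputable def s (ℓ : ℝ) : ℕ → ℝ
  | 0 => 0
  | t + 1 => if s ℓ t + 1 / (q t : ℝ) < ℓ then s ℓ t + 1 / (q t : ℝ) else s ℓ t

/-- inclusion condition -/
def C (ℓ : ℝ) (t : ℕ) : Prop := s ℓ t + 1 / (q t : ℝ) < ℓ

lemma s_succ_of_C {ℓ : ℝ} {t : ℕ} (h : C ℓ t) :
    s ℓ (t + 1) = s ℓ t + 1 / (q t : ℝ) := by
  rw [s]; exact if_pos h

lemma s_succ_of_not {ℓ : ℝ} {t : ℕ} (h : ¬ C ℓ t) : s ℓ (t + 1) = s ℓ t := by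
  rw [s]; exact if_neg h

lemma s_lt {ℓ : ℝ} (hℓ : 0 < ℓ) : ∀ t, s ℓ t < ℓ := by
  intro t
  induction t with
  | zero => simpa [s] using hℓ
  | succ t ih =>
    by_cases h : C ℓ t
    · rw [s_succ_of_C h]; exact h
    · rw [s_succ_of_not h]; exact ih

lemma s_mono (ℓ : ℝ) : Monotone (s ℓ) := by
  apply monotone_nat_of_le_succ
  intro t
  by_cases h : C ℓ t
  · rw [s_succ_of_C h]; linarith [q_inv_pos t]
  · rw [s_succ_of_not h]

lemma not_summable_q : ¬ Summable (fun t => (1 : ℝ) / (q t : ℝ)) := by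
  intro h
  have hbij : Function.Bijective (fun t => (⟨q t, q_prime t⟩ : Nat.Primes)) := by
    constructor
    · intro a b hab
      exact q_strictMono.injective (congrArg Subtype.val hab)
    · rintro ⟨p, hp⟩
      exact ⟨Nat.count Nat.Prime p, Subtype.ext (Nat.nth_count hp)⟩
  have := ((Equiv.ofBijective _ hbij).summable_iff
    (f := fun p : Nat.Primes => (1 / (p : ℕ) : ℝ))).1 h
  exact Nat.Primes.not_summable_one_div this

lemma tendsto_q_inv : Tendsto (fun t => (1 : ℝ) / (q t : ℝ)) atTop (𝓝 0) := by
  have h1 : ∀ t : ℕ, (0 : ℝ) ≤ 1 / (q t : ℝ) := fun t => (q_inv_pos t).le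
  have h2 : ∀ t : ℕ, 1 / (q t : ℝ) ≤ 1 / ((t : ℝ) + 1) := by
    intro t
    apply div_le_div_of_nonneg_left one_pos.le (by positivity)
    have h3 := Nat.add_two_le_nth_prime t
    have h4 : (t : ℝ) + 2 ≤ (q t : ℝ) := by exact_mod_cast h3
    linarith
  exact squeeze_zero h1 h2 tendsto_one_div_add_atTop_nhds_zero_nat

lemma tendsto_s {ℓ : ℝ} (hℓ : 0 < ℓ) : Tendsto (s ℓ) atTop (𝓝 ℓ) := by
  have hbdd : BddAbove (Set.range (s ℓ)) := by
    refine ⟨ℓ, ?_⟩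
    rintro x ⟨t, rfl⟩
    exact (s_lt hℓ t).le
  have hlim := tendsto_atTop_ciSup (s_mono ℓ) hbdd
  set L := ⨆ t, s ℓ t with hL
  have hLle : L ≤ ℓ := ciSup_le fun t => (s_lt hℓ t).le
  rcases eq_or_lt_of_le hLle with hE | hlt
  · rwa [hE] at hlim
  · exfalso
    obtain ⟨T, hT⟩ := eventually_atTop.1
      (tendsto_q_inv.eventually_lt_const (sub_pos.2 hlt))
    have hcond : ∀ t, T ≤ t → C ℓ t := by
      intro t ht
      have h1 : s ℓ t ≤ L := le_ciSup hbdd t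
      have h2 : 1 / (q t : ℝ) < ℓ - L := hT t ht
      unfold C; linarith
    have hsum : ∀ n, ∑ i ∈ Finset.range n, (1 : ℝ) / (q (i + T) : ℝ) = s ℓ (T + n) - s ℓ T := by
      intro n
      induction n with
      | zero => simp
      | succ n ih =>
        have e1 : T + (n + 1) = (T + n) + 1 := by omega
        have e2 : n + T = T + n := by omega
        rw [Finset.sum_range_succ, ih, e2, e1, s_succ_of_C (hcond (T + n) (by omega))]
        ring
    have hle : ∀ n, ∑ i ∈ Finset.range n, (1 : ℝ) / (q (i + T) : ℝ) ≤ ℓ := by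
      intro n
      rw [hsum n]
      have h1 := s_lt hℓ (T + n)
      have h2 : (0 : ℝ) ≤ s ℓ T := by
        have := s_mono ℓ (Nat.zero_le T)
        simpa [s] using this
      linarith
    have hs1 : Summable (fun i => (1 : ℝ) / (q (i + T) : ℝ)) :=
      summable_of_sum_range_le (fun i => (q_inv_pos _).le) hle
    have hs2 : Summable (fun t => (1 : ℝ) / (q t : ℝ)) :=
      (summable_nat_add_iff (f := fun t : ℕ => (1 : ℝ) / (q t : ℝ)) T).1 hs1
    exact not_summable_q hs2

lemma exists_skip {ℓ : ℝ} (hℓ : 0 < ℓ) : ∃ t₀, ¬ C ℓ t₀ := by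
  by_contra h
  push_neg at h
  have hsum : ∀ n, ∑ i ∈ Finset.range n, (1 : ℝ) / (q i : ℝ) = s ℓ n := by
    intro n
    induction n with
    | zero => simp [s]
    | succ n ih => rw [Finset.sum_range_succ, ih, s_succ_of_C (h n)]
  have hle : ∀ n, ∑ i ∈ Finset.range n, (1 : ℝ) / (q i : ℝ) ≤ ℓ := by
    intro n; rw [hsum n]; exact (s_lt hℓ n).le
  exact not_summable_q (summable_of_sum_range_le (fun n => (q_inv_pos _).le) hle)

/-- The key invariant after the first skip: the remainder is at most `2 / q t`. -/
lemma invariant {ℓ : ℝ} (hℓ : 0 < ℓ) {t₀ : ℕ} (ht₀ : ¬ C ℓ t₀) :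
    ∀ t, t₀ + 1 ≤ t → ℓ - s ℓ t ≤ 2 / (q t : ℝ) := by
  intro t ht
  induction t, ht using Nat.le_induction with
  | base =>
    rw [s_succ_of_not ht₀]
    have h1 : ℓ ≤ s ℓ t₀ + 1 / (q t₀ : ℝ) := not_lt.1 ht₀
    have h2 := cross t₀
    linarith
  | succ t ht ih =>
    by_cases hc : C ℓ t
    · rw [s_succ_of_C hc]
      have h2 := cross t
      have h3 : 2 / (q t : ℝ) = 1 / (q t : ℝ) + 1 / (q t : ℝ) := by ring
      linarith
    · rw [s_succ_of_not hc]
      have h1 : ℓ ≤ s ℓ t + 1 / (q t : ℝ) := not_lt.1 hc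
      have h2 := cross t
      linarith

lemma step_halve {ℓ : ℝ} (hℓ : 0 < ℓ) {t₀ : ℕ} (ht₀ : ¬ C ℓ t₀) {t : ℕ}
    (ht : t₀ + 1 ≤ t) (hc : C ℓ t) : ℓ - s ℓ (t + 1) ≤ (ℓ - s ℓ t) / 2 := by
  have h1 := invariant hℓ ht₀ t ht
  have h2 : 2 / (q t : ℝ) ≤ 2 * (1 / (q t : ℝ)) := by rw [mul_one_div]
  rw [s_succ_of_C hc]
  linarith

open scoped Classical in
/-- the cost function -/
noncomputable def G (ℓ : ℝ) (t : ℕ) : ℝ :=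
  if C ℓ t then 1 / Real.sqrt (q t : ℝ) else 0

lemma G_nonneg (ℓ : ℝ) (t : ℕ) : 0 ≤ G ℓ t := by
  unfold G
  split
  · positivity
  · exact le_rfl

noncomputable def K : ℝ := (1 - (Real.sqrt 2)⁻¹)⁻¹

lemma sqrt2_inv_lt_one : (Real.sqrt 2)⁻¹ < 1 := by
  rw [inv_lt_one_iff₀]
  right
  rw [show (1 : ℝ) = Real.sqrt 1 by rw [Real.sqrt_one]]
  exact Real.sqrt_lt_sqrt (by norm_num) (by norm_num)

lemma K_pos : 0 < K := by
  have h := sqrt2_inv_lt_one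
  unfold K
  exact inv_pos.2 (by linarith)

lemma K_mul : K * (1 - (Real.sqrt 2)⁻¹) = 1 := by
  have h := sqrt2_inv_lt_one
  unfold K
  exact inv_mul_cancel₀ (by linarith)

lemma cost_step {ℓ : ℝ} (hℓ : 0 < ℓ) {t₀ : ℕ} (ht₀ : ¬ C ℓ t₀) {t : ℕ}
    (ht : t₀ + 1 ≤ t) :
    G ℓ t ≤ K * (Real.sqrt (ℓ - s ℓ t) - Real.sqrt (ℓ - s ℓ (t + 1))) := by
  by_cases hc : C ℓ t
  · have hρ : (0 : ℝ) < ℓ - s ℓ t := sub_pos.2 (s_lt hℓ t)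
    have hρ' : (0 : ℝ) ≤ ℓ - s ℓ (t + 1) := sub_nonneg.2 (s_lt hℓ (t + 1)).le
    have h1q : 1 / (q t : ℝ) < ℓ - s ℓ t := by
      have := hc; unfold C at this; linarith
    have hsq1 : 1 / Real.sqrt (q t : ℝ) < Real.sqrt (ℓ - s ℓ t) := by
      rw [one_div, ← Real.sqrt_inv]
      exact Real.sqrt_lt_sqrt (by positivity) (by rwa [← one_div])
    have hhalf := step_halve hℓ ht₀ ht hc
    have hsq2 : Real.sqrt (ℓ - s ℓ (t + 1)) ≤ Real.sqrt (ℓ - s ℓ t) * (Real.sqrt 2)⁻¹ := by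
      have h1 : Real.sqrt (ℓ - s ℓ (t + 1)) ≤ Real.sqrt ((ℓ - s ℓ t) / 2) :=
        Real.sqrt_le_sqrt hhalf
      rwa [Real.sqrt_div hρ.le, div_eq_mul_inv] at h1
    have hdiff : (1 - (Real.sqrt 2)⁻¹) * Real.sqrt (ℓ - s ℓ t) ≤
        Real.sqrt (ℓ - s ℓ t) - Real.sqrt (ℓ - s ℓ (t + 1)) := by nlinarith
    have hG : G ℓ t = 1 / Real.sqrt (q t : ℝ) := if_pos hc
    calc G ℓ t ≤ Real.sqrt (ℓ - s ℓ t) := by rw [hG]; exact hsq1.le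
      _ = K * ((1 - (Real.sqrt 2)⁻¹) * Real.sqrt (ℓ - s ℓ t)) := by
          rw [← mul_assoc, K_mul, one_mul]
      _ ≤ K * (Real.sqrt (ℓ - s ℓ t) - Real.sqrt (ℓ - s ℓ (t + 1))) := by
          exact mul_le_mul_of_nonneg_left hdiff K_pos.le
  · have hG : G ℓ t = 0 := if_neg hc
    rw [hG, s_succ_of_not hc, sub_self, mul_zero]

lemma sum_G_le {ℓ : ℝ} (hℓ : 0 < ℓ) {t₀ : ℕ} (ht₀ : ¬ C ℓ t₀) :
    ∀ n, ∑ t ∈ Finset.range n, G ℓ t ≤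
      (∑ t ∈ Finset.range (t₀ + 1), G ℓ t) + K * Real.sqrt (ℓ - s ℓ (t₀ + 1)) := by
  set D := (∑ t ∈ Finset.range (t₀ + 1), G ℓ t) + K * Real.sqrt (ℓ - s ℓ (t₀ + 1)) with hD
  have aux : ∀ n, t₀ + 1 ≤ n →
      ∑ t ∈ Finset.range n, G ℓ t + K * Real.sqrt (ℓ - s ℓ n) ≤ D := by
    intro n hn
    induction n, hn using Nat.le_induction with
    | base => rw [hD]
    | succ n hn ih =>
      rw [Finset.sum_range_succ]
      have h1 := cost_step hℓ ht₀ hn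
      linarith
  intro n
  by_cases h : t₀ + 1 ≤ n
  · have h1 := aux n h
    have h2 : 0 ≤ K * Real.sqrt (ℓ - s ℓ n) := mul_nonneg K_pos.le (Real.sqrt_nonneg _)
    linarith
  · push_neg at h
    have h1 : ∑ t ∈ Finset.range n, G ℓ t ≤ ∑ t ∈ Finset.range (t₀ + 1), G ℓ t := by
      apply Finset.sum_le_sum_of_subset_of_nonneg
      · exact Finset.range_subset_range.2 (by omega)
      · intro i _ _; exact G_nonneg ℓ i
    have h2 : 0 ≤ K * Real.sqrt (ℓ - s ℓ (t₀ + 1)) :=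
      mul_nonneg K_pos.le (Real.sqrt_nonneg _)
    linarith

lemma summable_G {ℓ : ℝ} (hℓ : 0 < ℓ) : Summable (G ℓ) := by
  obtain ⟨t₀, ht₀⟩ := exists_skip hℓ
  exact summable_of_sum_range_le (G_nonneg ℓ) (sum_G_le hℓ ht₀)

open scoped Classical in
/-- the running sums are exactly the partial sums of the indicator series -/
lemma sum_F (ℓ : ℝ) (n : ℕ) :
    ∑ t ∈ Finset.range n, (if C ℓ t then (1 : ℝ) / (q t : ℝ) else 0) = s ℓ n := by
  induction n with
  | zero => simp [s]
  | succ n ih =>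
    rw [Finset.sum_range_succ, ih]
    by_cases h : C ℓ n
    · rw [if_pos h, s_succ_of_C h]
    · rw [if_neg h, s_succ_of_not h, add_zero]

open scoped Classical in
lemma hasSum_F {ℓ : ℝ} (hℓ : 0 < ℓ) :
    HasSum (fun t => if C ℓ t then (1 : ℝ) / (q t : ℝ) else 0) ℓ := by
  have hnn : ∀ t, 0 ≤ (if C ℓ t then (1 : ℝ) / (q t : ℝ) else 0) := by
    intro t; split
    · exact (q_inv_pos t).le
    · exact le_rfl
  have hle : ∀ n, ∑ t ∈ Finset.range n, (if C ℓ t then (1 : ℝ) / (q t : ℝ) else 0) ≤ ℓ := by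
    intro n; rw [sum_F]; exact (s_lt hℓ n).le
  have hsummable := summable_of_sum_range_le hnn hle
  have h1 := hsummable.hasSum
  have h2 := h1.tendsto_sum_nat
  have h3 : Tendsto (fun n => ∑ t ∈ Finset.range n, (if C ℓ t then (1 : ℝ) / (q t : ℝ) else 0))
      atTop (𝓝 ℓ) := by
    have := tendsto_s hℓ
    refine this.congr fun n => (sum_F ℓ n).symm
  have h4 := tendsto_nhds_unique h2 h3
  rwa [h4] at h1

lemma S_infinite {ℓ : ℝ} (hℓ : 0 < ℓ) : {t | C ℓ t}.Infinite := by
  by_contra h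
  rw [Set.not_infinite] at h
  obtain ⟨N, hN⟩ := h.bddAbove
  have hnc : ∀ m, N + 1 ≤ m → ¬ C ℓ m := by
    intro m hm hCm
    have : m ≤ N := hN hCm
    omega
  have hconst : ∀ m, N + 1 ≤ m → s ℓ m = s ℓ (N + 1) := by
    intro m hm
    induction m, hm using Nat.le_induction with
    | base => rfl
    | succ m hm ih => rw [s_succ_of_not (hnc m hm), ih]
  have h1 : Tendsto (fun k : ℕ => s ℓ (k + (N + 1))) atTop (𝓝 ℓ) :=
    (tendsto_s hℓ).comp (tendsto_add_atTop_nat (N + 1))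
  have h2 : Tendsto (fun k : ℕ => s ℓ (k + (N + 1))) atTop (𝓝 (s ℓ (N + 1))) := by
    have : (fun k : ℕ => s ℓ (k + (N + 1))) = fun _ => s ℓ (N + 1) := by
      funext k
      exact hconst (k + (N + 1)) (by omega)
    rw [this]
    exact tendsto_const_nhds
  have := tendsto_nhds_unique h1 h2
  exact absurd this.symm (ne_of_lt (s_lt hℓ (N + 1)))

end Stmt1Greedy

theorem stmt_1 (ℓ : ℝ) (hℓ : 0 < ℓ) :
    ∃ P : Set ℕ, (∀ p ∈ P, p.Prime) ∧ P.Infinite ∧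
      HasSum (fun p : P => (1 : ℝ) / (p : ℕ)) ℓ ∧
      Summable (fun p : P => (1 : ℝ) / Real.sqrt (p : ℕ)) := by
  classical
  set S : Set ℕ := {t | Stmt1Greedy.C ℓ t} with hS
  have hinj : Function.Injective Stmt1Greedy.q := Stmt1Greedy.q_strictMono.injective
  set e := Equiv.Set.image Stmt1Greedy.q S hinj with he
  refine ⟨Stmt1Greedy.q '' S, ?_, ?_, ?_, ?_⟩
  · rintro p ⟨t, _, rfl⟩
    exact Stmt1Greedy.q_prime t
  · exact (Stmt1Greedy.S_infinite hℓ).image hinj.injOn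
  · refine (e.hasSum_iff (f := fun p : ↥(Stmt1Greedy.q '' S) => (1 : ℝ) / ((p : ℕ) : ℝ))).1 ?_
    have hco : ((fun p : ↥(Stmt1Greedy.q '' S) => (1 : ℝ) / ((p : ℕ) : ℝ)) ∘ e) =
        (fun t : ℕ => (1 : ℝ) / (Stmt1Greedy.q t : ℝ)) ∘ (Subtype.val : ↥S → ℕ) := by
      funext t
      simp [he, Equiv.Set.image, Equiv.Set.imageOfInjOn]
    rw [hco, hasSum_subtype_iff_indicator]
    have hind : S.indicator (fun t : ℕ => (1 : ℝ) / (Stmt1Greedy.q t : ℝ)) =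
        fun t => if Stmt1Greedy.C ℓ t then (1 : ℝ) / (Stmt1Greedy.q t : ℝ) else 0 := by
      funext t
      by_cases h : Stmt1Greedy.C ℓ t <;>
        simp [Set.indicator_apply, hS, h]
    rw [hind]
    exact Stmt1Greedy.hasSum_F hℓ
  · refine (e.summable_iff (f := fun p : ↥(Stmt1Greedy.q '' S) =>
      (1 : ℝ) / Real.sqrt ((p : ℕ) : ℝ))).1 ?_
    have hco : ((fun p : ↥(Stmt1Greedy.q '' S) => (1 : ℝ) / Real.sqrt ((p : ℕ) : ℝ)) ∘ e) =
        (fun t : ℕ => (1 : ℝ) / Real.sqrt (Stmt1Greedy.q t : ℝ)) ∘ (Subtype.val : ↥S → ℕ) := by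
      funext t
      simp [he, Equiv.Set.image, Equiv.Set.imageOfInjOn]
    rw [hco, summable_subtype_iff_indicator]
    have hind : S.indicator (fun t : ℕ => (1 : ℝ) / Real.sqrt (Stmt1Greedy.q t : ℝ)) =
        Stmt1Greedy.G ℓ := by
      funext t
      by_cases h : Stmt1Greedy.C ℓ t <;>
        simp [Set.indicator_apply, hS, h, Stmt1Greedy.G]
    rw [hind]
    exact Stmt1Greedy.summable_G hℓ
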